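/- Let p ∈ ℝ³ with p ≠ 0, and let e ∈ S² be a unit vector perpendicular to p. For k > |p|/2, define x̂ = √(1 − |p|²/(4k²))·e + p/(2k), d₁ = √(1 − |p|²/(4k²))·e − p/(2k), d₂ = p/|p|. Then x̂, d₁, d₂ ∈ S², k·(x̂ − d₁) = p, and |k·(x̂ − d₂)| → ∞ as k → ∞. -/
import Mathlib


open Filter
open scoped RealInnerProductSpace

lemma sd_norm_aux (p e : EuclideanSpace ℝ (Fin 3)) (he : ‖e‖ = 1)
    (hpe : (⟪e, p⟫ : ℝ) = 0) (a b : ℝ) :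
    ‖a • e + b • p‖ ^ 2 = a ^ 2 + b ^ 2 * ‖p‖ ^ 2 := by
  rw [norm_add_sq_real, norm_smul, norm_smul, real_inner_smul_left, real_inner_smul_right, hpe]
  simp [mul_pow, he]

/-- Construction of scattering directions: for `p ≠ 0` and a unit vector `e ⊥ p`,
the vectors `x̂ = √(1-|p|²/(4k²)) e + p/(2k)`, `d₁ = √(1-|p|²/(4k²)) e - p/(2k)`,
`d₂ = p/|p|` are unit vectors, `k(x̂ - d₁) = p`, and `|k(x̂ - d₂)| → ∞` as `k → ∞`. -/
theorem scattering_directions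
    (p e : EuclideanSpace ℝ (Fin 3)) (hp : p ≠ 0) (he : ‖e‖ = 1)
    (hpe : (⟪e, p⟫ : ℝ) = 0) :
    (∀ k : ℝ, ‖p‖ / 2 < k →
      ‖Real.sqrt (1 - ‖p‖ ^ 2 / (4 * k ^ 2)) • e + (1 / (2 * k)) • p‖ = 1 ∧
      ‖Real.sqrt (1 - ‖p‖ ^ 2 / (4 * k ^ 2)) • e - (1 / (2 * k)) • p‖ = 1 ∧
      ‖(‖p‖⁻¹ • p)‖ = 1 ∧
      k • ((Real.sqrt (1 - ‖p‖ ^ 2 / (4 * k ^ 2)) • e + (1 / (2 * k)) • p) -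
           (Real.sqrt (1 - ‖p‖ ^ 2 / (4 * k ^ 2)) • e - (1 / (2 * k)) • p)) = p) ∧
    Tendsto (fun k : ℝ =>
        ‖k • ((Real.sqrt (1 - ‖p‖ ^ 2 / (4 * k ^ 2)) • e + (1 / (2 * k)) • p) -
              ‖p‖⁻¹ • p)‖) atTop atTop := by
  have hpn : (0:ℝ) < ‖p‖ := norm_pos_iff.mpr hp
  constructor
  · intro k hk
    have hk0 : (0:ℝ) < k := lt_of_le_of_lt (by positivity) hk
    have hs : (0:ℝ) ≤ 1 - ‖p‖ ^ 2 / (4 * k ^ 2) := by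
      have h2 : ‖p‖ < 2 * k := by linarith
      have : ‖p‖ ^ 2 < (2 * k) ^ 2 := by
        apply pow_lt_pow_left₀ h2 (norm_nonneg p)
        norm_num
      rw [sub_nonneg, div_le_one (by positivity)]
      nlinarith
    have hsq : Real.sqrt (1 - ‖p‖ ^ 2 / (4 * k ^ 2)) ^ 2 = 1 - ‖p‖ ^ 2 / (4 * k ^ 2) :=
      Real.sq_sqrt hs
    refine ⟨?_, ?_, ?_, ?_⟩
    · have := sd_norm_aux p e he hpe (Real.sqrt (1 - ‖p‖ ^ 2 / (4 * k ^ 2))) (1 / (2 * k))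
      rw [hsq] at this
      have h1 : ‖Real.sqrt (1 - ‖p‖ ^ 2 / (4 * k ^ 2)) • e + (1 / (2 * k)) • p‖ ^ 2 = 1 := by
        rw [this]; field_simp; ring
      nlinarith [norm_nonneg (Real.sqrt (1 - ‖p‖ ^ 2 / (4 * k ^ 2)) • e + (1 / (2 * k)) • p)]
    · have := sd_norm_aux p e he hpe (Real.sqrt (1 - ‖p‖ ^ 2 / (4 * k ^ 2))) (-(1 / (2 * k)))
      rw [hsq] at this
      rw [neg_smul, ← sub_eq_add_neg] at this
      have h1 : ‖Real.sqrt (1 - ‖p‖ ^ 2 / (4 * k ^ 2)) • e - (1 / (2 * k)) • p‖ ^ 2 = 1 := by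
        rw [this]; field_simp; ring
      nlinarith [norm_nonneg (Real.sqrt (1 - ‖p‖ ^ 2 / (4 * k ^ 2)) • e - (1 / (2 * k)) • p)]
    · rw [norm_smul]
      simp [abs_of_pos (inv_pos.mpr hpn)]
      field_simp
    · have h : ∀ (X B : EuclideanSpace ℝ (Fin 3)), (X + B) - (X - B) = B + B := by
        intro X B; abel
      rw [h, smul_add, smul_smul, ← add_smul]
      have : k * (1 / (2 * k)) + k * (1 / (2 * k)) = 1 := by field_simp; ring
      rw [this, one_smul]
  · refine tendsto_atTop_mono' atTop ?_ (Tendsto.atTop_div_const two_pos tendsto_id)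
    · filter_upwards [eventually_ge_atTop (max ‖p‖ 1)] with k hk
      have hk1 : (1:ℝ) ≤ k := le_trans (le_max_right _ _) hk
      have hkp : ‖p‖ ≤ k := le_trans (le_max_left _ _) hk
      have hk0 : (0:ℝ) < k := lt_of_lt_of_le one_pos hk1
      set v := k • ((Real.sqrt (1 - ‖p‖ ^ 2 / (4 * k ^ 2)) • e + (1 / (2 * k)) • p) -
              ‖p‖⁻¹ • p) with hv
      have hinner : (⟪e, v⟫ : ℝ) = k * Real.sqrt (1 - ‖p‖ ^ 2 / (4 * k ^ 2)) := by
        rw [hv]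
        rw [real_inner_smul_right, inner_sub_right, inner_add_right,
          real_inner_smul_right, real_inner_smul_right, real_inner_smul_right, hpe,
          real_inner_self_eq_norm_sq, he]
        ring
      have hsge : (1:ℝ)/2 ≤ Real.sqrt (1 - ‖p‖ ^ 2 / (4 * k ^ 2)) := by
        rw [show ((1:ℝ)/2) = Real.sqrt (1/4) by
          rw [show (1:ℝ)/4 = (1/2)^2 by norm_num, Real.sqrt_sq]; norm_num]
        apply Real.sqrt_le_sqrt
        have h2 : ‖p‖ ^ 2 ≤ k ^ 2 := by nlinarith [norm_nonneg p]
        have h4 : ‖p‖ ^ 2 / (4 * k ^ 2) ≤ 1/4 := by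
          rw [div_le_iff₀ (by positivity)]; nlinarith
        linarith
      have hle : k / 2 ≤ ⟪e, v⟫ := by
        rw [hinner]
        nlinarith
      calc k / 2 ≤ ⟪e, v⟫ := hle
        _ ≤ ‖e‖ * ‖v‖ := real_inner_le_norm e v
        _ = ‖v‖ := by rw [he, one_mul]
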